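/- The schema uJ15: □(p ∨ ◇p) → Ip (where Ip := ⊤▷p) is not provable in IL⁻(J1). Concretely: in the IL⁻-model with W = {w,x,y}, R = {(w,x),(w,y),(x,y)}, S_w = {(x,x),(y,y)}, S_x = {(y,y)}, S_y = ∅, and p true exactly at y, the frame validates J1 (since x R y implies y S_x y for all x,y), but w does not satisfy □(p ∨ ◇p) → ⊤▷p. -/

import Mathlib

/-- Formulas of the language L(□,▷) of interpretability logic. -/
inductive Fml : Type
  | bot : Fml
  | var : ℕ → Fml
  | imp : Fml → Fml → Fml
  | box : Fml → Fml
  | rhd : Fml → Fml → Fml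
  deriving DecidableEq

namespace Fml
def neg (A : Fml) : Fml := A.imp bot
def top : Fml := Fml.bot.imp Fml.bot
def or (A B : Fml) : Fml := A.neg.imp B
def and (A B : Fml) : Fml := (A.imp B.neg).neg
def dia (A : Fml) : Fml := (A.neg.box).neg
end Fml

/-- A formula is a propositional tautology if every Boolean valuation that treats
⊥ and → classically (and is otherwise arbitrary on atoms, boxed and ▷-formulas)
makes it true. -/
def Taut (A : Fml) : Prop :=
  ∀ v : Fml → Bool, v Fml.bot = false →
    (∀ B C : Fml, v (B.imp C) = (!(v B) || v C)) → v A = true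

/-- Provability in IL⁻ extended by an additional set `Ax` of axioms.
Axioms: G1 (tautologies), G2, G3 (Löb), J3, J6 (both directions);
rules: modus ponens, necessitation, R1 and R2. -/
inductive ILMinus (Ax : Fml → Prop) : Fml → Prop
  | ax {A : Fml} : Ax A → ILMinus Ax A
  | taut {A : Fml} : Taut A → ILMinus Ax A
  | G2 (A B : Fml) : ILMinus Ax (((A.imp B).box).imp ((A.box).imp (B.box)))
  | G3 (A : Fml) : ILMinus Ax ((((A.box).imp A).box).imp (A.box))
  | J3 (A B C : Fml) : ILMinus Ax (((A.rhd C).and (B.rhd C)).imp ((A.or B).rhd C))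
  | J6a (A : Fml) : ILMinus Ax ((A.box).imp ((A.neg).rhd Fml.bot))
  | J6b (A : Fml) : ILMinus Ax (((A.neg).rhd Fml.bot).imp (A.box))
  | mp {A B : Fml} : ILMinus Ax (A.imp B) → ILMinus Ax A → ILMinus Ax B
  | nec {A : Fml} : ILMinus Ax A → ILMinus Ax (A.box)
  | R1 {A B : Fml} (C : Fml) :
      ILMinus Ax (A.imp B) → ILMinus Ax ((C.rhd A).imp (C.rhd B))
  | R2 {A B : Fml} (C : Fml) :
      ILMinus Ax (A.imp B) → ILMinus Ax ((B.rhd C).imp (A.rhd C))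

/-- The axiom schema J1 : □(A→B) → A▷B. -/
def J1Ax : Fml → Prop := fun F => ∃ A B : Fml, F = ((A.imp B).box).imp (A.rhd B)

/-- The axiom schema J2 : (A▷B)∧(B▷C) → A▷C. -/
def J2Ax : Fml → Prop := fun F => ∃ A B C : Fml, F = ((A.rhd B).and (B.rhd C)).imp (A.rhd C)

/-- The axiom schema J2₊ : (A▷(B∨C))∧(B▷C) → A▷C. -/
def J2plusAx : Fml → Prop :=
  fun F => ∃ A B C : Fml, F = ((A.rhd (B.or C)).and (B.rhd C)).imp (A.rhd C)

/-- The axiom schema J5 : ◇A ▷ A. -/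
def J5Ax : Fml → Prop := fun F => ∃ A : Fml, F = (A.dia).rhd A

/-- An IL⁻-frame: W nonempty, R transitive and conversely well-founded,
and S_w ⊆ R[w] × W for each w (here `S w x y` means x S_w y). -/
structure ILFrame where
  W : Type
  R : W → W → Prop
  S : W → W → W → Prop
  ne : Nonempty W
  trans : Transitive R
  cwf : WellFounded (fun x y => R y x)
  S_dom : ∀ w x y, S w x y → R w x

/-- Satisfaction in a model over raw relational data. -/
def Sat {W : Type} (R : W → W → Prop) (S : W → W → W → Prop)
    (V : W → ℕ → Prop) : W → Fml → Prop
  | _, .bot => False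
  | w, .var n => V w n
  | w, .imp A B => Sat R S V w A → Sat R S V w B
  | w, .box A => ∀ x, R w x → Sat R S V x A
  | w, .rhd A B => ∀ x, R w x → Sat R S V x A → ∃ y, S w x y ∧ Sat R S V y B

/-- A formula is valid in an IL⁻-frame if it is satisfied at every world of
every model based on the frame. -/
def Valid (F : ILFrame) (A : Fml) : Prop :=
  ∀ (V : F.W → ℕ → Prop) (w : F.W), Sat F.R F.S V w A

/-- The worlds of the counterexample model: 0 = w, 1 = x, 2 = y. -/
def R16 : Fin 3 → Fin 3 → Prop :=
  fun a b => (a = 0 ∧ b = 1) ∨ (a = 0 ∧ b = 2) ∨ (a = 1 ∧ b = 2)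

/-- S_w = {(x,x),(y,y)}, S_x = {(y,y)}, S_y = ∅ (here `S16 w a b` means a S_w b). -/
def S16 : Fin 3 → Fin 3 → Fin 3 → Prop :=
  fun w a b => (w = 0 ∧ a = 1 ∧ b = 1) ∨ (w = 0 ∧ a = 2 ∧ b = 2) ∨
    (w = 1 ∧ a = 2 ∧ b = 2)

/-- p is true exactly at y. -/
def V16 : Fin 3 → ℕ → Prop := fun a _ => a = 2

section Aux

variable {W : Type} {R : W → W → Prop} {S : W → W → W → Prop} {V : W → ℕ → Prop}

lemma sat_taut {A : Fml} (h : Taut A) (w : W) : Sat R S V w A := by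
  classical
  let v : Fml → Bool := fun B => decide (Sat R S V w B)
  have hv := h v (by show decide (Sat R S V w Fml.bot) = false; exact decide_eq_false (fun h => h)) (by
    intro B C
    by_cases hB : Sat R S V w B <;> by_cases hC : Sat R S V w C <;>
      simp [v, Sat, hB, hC])
  have : decide (Sat R S V w A) = true := hv
  simpa using this

lemma sound {A : Fml} (h : ILMinus J1Ax A)
    (htrans : Transitive R) (hcwf : WellFounded (fun a b => R b a))
    (hJ1 : ∀ a b, R a b → S a b b) :
    ∀ (V : W → ℕ → Prop) (w : W), Sat R S V w A := by
  induction h with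
  | ax hAx =>
      obtain ⟨A, B, rfl⟩ := hAx
      intro V w hbox x hx hA
      exact ⟨x, hJ1 w x hx, hbox x hx hA⟩
  | taut ht => intro V w; exact sat_taut ht w
  | G2 A B => intro V w h1 h2 x hx; exact h1 x hx (h2 x hx)
  | G3 A =>
      intro V w h
      have key : ∀ x, R w x → Sat R S V x A := by
        intro x
        induction x using WellFounded.induction hcwf with
        | _ x ih =>
            intro hx
            exact h x hx (fun y hy => ih y hy (htrans hx hy))
      exact key
  | J3 A B C =>
      intro V w hand x hx hor
      classical
      have hA : Sat R S V w (A.rhd C) := by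
        by_contra hnA
        exact hand (fun h1 _ => hnA h1)
      have hB : Sat R S V w (B.rhd C) := by
        by_contra hnB
        exact hand (fun _ h2 => hnB h2)
      by_cases hxa : Sat R S V x A
      · exact hA x hx hxa
      · exact hB x hx (hor hxa)
  | J6a A => intro V w hb x hx hnA; exact (hnA (hb x hx)).elim
  | J6b A =>
      intro V w h x hx
      classical
      by_contra hn
      obtain ⟨y, _, hy⟩ := h x hx hn
      exact hy
  | mp _ _ ih1 ih2 => intro V w; exact ih1 V w (ih2 V w)
  | nec _ ih => intro V w x hx; exact ih V x
  | R1 C _ ih =>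
      intro V w hCA x hx hC
      obtain ⟨y, hy, hA⟩ := hCA x hx hC
      exact ⟨y, hy, ih V y hA⟩
  | R2 C _ ih => intro V w hBC x hx hA; exact hBC x hx (ih V x hA)

end Aux

lemma R16_trans : Transitive R16 := by
  unfold Transitive R16
  decide

lemma R16_cwf : WellFounded (fun a b => R16 b a) := by
  have hm : WellFounded (InvImage Nat.lt (fun a : Fin 3 => 2 - a.val)) :=
    InvImage.wf _ Nat.lt_wfRel.wf
  refine Subrelation.wf (fun {a b} h => ?_) hm
  have : b.val < a.val := by
    rcases h with ⟨rfl, rfl⟩ | ⟨rfl, rfl⟩ | ⟨rfl, rfl⟩ <;> decide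
  have ha := a.isLt
  exact Nat.sub_lt_sub_left (by omega) this

lemma S16_dom : ∀ w a b, S16 w a b → R16 w a := by
  unfold S16 R16
  decide

lemma S16_J1 : ∀ a b, R16 a b → S16 a b b := by
  unfold S16 R16
  decide

lemma sat_fail : ¬ Sat R16 S16 V16 0
    ((((Fml.var 0).or (Fml.var 0).dia).box).imp (Fml.top.rhd (Fml.var 0))) := by
  intro h
  have hbox : Sat R16 S16 V16 0 (((Fml.var 0).or (Fml.var 0).dia).box) := by
    intro x hx
    rcases hx with ⟨h0, rfl⟩ | ⟨h0, rfl⟩ | ⟨h1, rfl⟩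
    · -- x = 1 : ◇p holds via 2
      intro _ hdia
      exact hdia 2 (by unfold R16; simp) rfl
    · -- x = 2 : p holds
      intro hnp
      exact (hnp rfl).elim
    · exact absurd h1 (by decide)
  obtain ⟨y, hS, hp⟩ := h hbox 1 (by unfold R16; simp) (fun h => h)
  rcases hS with ⟨_, _, rfl⟩ | ⟨_, h2, _⟩ | ⟨h1, _, _⟩
  · exact absurd hp (by simp [Sat, V16])
  · exact absurd h2 (by decide)
  · exact absurd h1 (by decide)

/-- The schema uJ15 : □(p ∨ ◇p) → Ip (with Ip := ⊤▷p) is not provable in IL⁻(J1).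
Concretely, (Fin 3, R16, S16) is an IL⁻-frame satisfying the frame condition of J1
(x R y implies y S_x y), yet the instance fails at the world w = 0 under V16. -/
theorem uJ15_unprovable_in_ILMinus_J1 :
    ¬ ILMinus J1Ax
        ((((Fml.var 0).or (Fml.var 0).dia).box).imp (Fml.top.rhd (Fml.var 0))) ∧
      Transitive R16 ∧
      WellFounded (fun a b => R16 b a) ∧
      (∀ w a b, S16 w a b → R16 w a) ∧
      (∀ a b, R16 a b → S16 a b b) ∧
      ¬ Sat R16 S16 V16 0
          ((((Fml.var 0).or (Fml.var 0).dia).box).imp (Fml.top.rhd (Fml.var 0))) := by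
  refine ⟨?_, R16_trans, R16_cwf, S16_dom, S16_J1, sat_fail⟩
  intro h
  exact sat_fail (sound h R16_trans R16_cwf S16_J1 V16 0)
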